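/- arXiv:1204.0323 — 3 statements merged into one kernel-verified Lean document; each statement's English description precedes it below -/
import Mathlib

section
/- Suppose condition B holds for the game G = (u¹,u²): there exists a non-constant stationary strategy y with U²(μ₀,y) ≥ v² and U¹(μ₀,y) ≥ U¹(μ,y) for every μ ∈ M(m). Then for every ε > 0 there exists a game G' = (ũ¹,ũ²) with ‖ũ¹ − u¹‖ < ε and ‖ũ² − u²‖ < ε, and a stationary strategy ỹ, such that Ũ²(μ₀,ỹ) > ṽ² and Ũ¹(μ₀,ỹ) > Ũ¹(μ,ỹ) for every μ ∈ M(m) with μ ≠ μ₀ (i.e., the set Ê(M) of the game G' is non-empty), where Ũ¹, Ũ², ṽ² are defined from ũ¹, ũ² as U¹, U², v² are from u¹, u². -/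
/-- `μ` is a probability distribution on `S × S` whose two marginals both equal `m`. -/
def IsCopula {S : Type*} [Fintype S] (m : S → ℝ) (μ : S × S → ℝ) : Prop :=
  (∀ q, 0 ≤ μ q) ∧ (∑ q : S × S, μ q = 1) ∧
    (∀ s, ∑ a, μ (s, a) = m s) ∧ (∀ a, ∑ s, μ (s, a) = m a)

/-- The diagonal copula `μ₀`. -/
def mu0 {S : Type*} [DecidableEq S] (m : S → ℝ) : S × S → ℝ :=
  fun q => if q.1 = q.2 then m q.1 else 0

/-- `y` is a stationary strategy: each `y a` is a probability distribution on `B`. -/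
def IsStrategy {S B : Type*} [Fintype B] (y : S → B → ℝ) : Prop :=
  (∀ a b, 0 ≤ y a b) ∧ ∀ a, ∑ b, y a b = 1

/-- `U(μ, y) = Σ_{(s,a)} μ(s,a) Σ_b y(b|a) u(s,b)`. -/
def Upay {S B : Type*} [Fintype S] [Fintype B]
    (u : S × B → ℝ) (μ : S × S → ℝ) (y : S → B → ℝ) : ℝ :=
  ∑ s, ∑ a, μ (s, a) * ∑ b, y a b * u (s, b)

lemma sum_diag_sub {S : Type*} [Fintype S] (m : S → ℝ) (μ : S × S → ℝ)
    (h3 : ∀ s, ∑ a, μ (s, a) = m s) (F : S → S → ℝ) :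
    (∑ s, m s * F s s) - (∑ s, ∑ a, μ (s, a) * F s a)
      = ∑ s, ∑ a, μ (s, a) * (F s s - F s a) := by
  rw [← Finset.sum_sub_distrib]
  refine Finset.sum_congr rfl (fun s _ => ?_)
  rw [← h3 s, Finset.sum_mul, ← Finset.sum_sub_distrib]
  exact Finset.sum_congr rfl (fun a _ => by ring)

lemma sum_skew {S : Type*} [Fintype S] (m : S → ℝ) (μ : S × S → ℝ)
    (h3 : ∀ s, ∑ a, μ (s, a) = m s) (h4 : ∀ a, ∑ s, μ (s, a) = m a) (f : S → ℝ) :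
    ∑ s, ∑ a, μ (s, a) * (f s - f a) = 0 := by
  have e1 : ∑ s, ∑ a, μ (s, a) * f s = ∑ s, m s * f s := by
    refine Finset.sum_congr rfl (fun s _ => ?_)
    rw [← Finset.sum_mul, h3]
  have e2 : ∑ s, ∑ a, μ (s, a) * f a = ∑ s, m s * f s := by
    rw [Finset.sum_comm]
    refine Finset.sum_congr rfl (fun a _ => ?_)
    rw [← Finset.sum_mul, h4]
  simp only [mul_sub, Finset.sum_sub_distrib, e1, e2, sub_self]

lemma quad_identity {S B : Type*} [Fintype S] [Fintype B] (m : S → ℝ) (μ : S × S → ℝ)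
    (h3 : ∀ s, ∑ a, μ (s, a) = m s) (h4 : ∀ a, ∑ s, μ (s, a) = m a) (v : S → B → ℝ) :
    ∑ s, ∑ a, μ (s, a) * (∑ b, (v s b - v a b) * v s b)
      = ∑ s, ∑ a, μ (s, a) * ((∑ b, (v s b - v a b)^2) / 2) := by
  have key : ∀ s a : S, (∑ b, (v s b - v a b) * v s b)
      = (∑ b, (v s b - v a b)^2) / 2 + ((∑ b, (v s b)^2) - (∑ b, (v a b)^2)) / 2 := by
    intro s a
    rw [Finset.sum_div, ← Finset.sum_sub_distrib, Finset.sum_div, ← Finset.sum_add_distrib]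
    exact Finset.sum_congr rfl (fun b _ => by ring)
  calc ∑ s, ∑ a, μ (s, a) * (∑ b, (v s b - v a b) * v s b)
      = ∑ s, ∑ a, (μ (s, a) * ((∑ b, (v s b - v a b)^2) / 2)
          + μ (s, a) * ((fun x => (∑ b, (v x b)^2) / 2) s - (fun x => (∑ b, (v x b)^2) / 2) a)) := by
        refine Finset.sum_congr rfl fun s _ => Finset.sum_congr rfl fun a _ => ?_
        rw [key s a]; ring
    _ = _ := by
        simp only [Finset.sum_add_distrib]
        rw [sum_skew m μ h3 h4 (fun x => (∑ b, (v x b)^2) / 2)]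
        ring

lemma Upay_mu0 {S B : Type*} [Fintype S] [DecidableEq S] [Fintype B]
    (m : S → ℝ) (u : S × B → ℝ) (y : S → B → ℝ) :
    Upay u (mu0 m) y = ∑ s, m s * ∑ b, y s b * u (s, b) := by
  unfold Upay mu0
  refine Finset.sum_congr rfl (fun s _ => ?_)
  rw [Finset.sum_eq_single s]
  · simp
  · intro a _ has; simp [Ne.symm has]
  · intro h; exact absurd (Finset.mem_univ s) h

set_option maxHeartbeats 2000000 in
theorem stmt13 {S B : Type*} [Fintype S] [DecidableEq S] (hS : 1 < Fintype.card S)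
    [Fintype B] [Nonempty B]
    (m : S → ℝ) (hm : ∀ s, 0 < m s) (hm1 : ∑ s, m s = 1)
    (u1 u2 : S × B → ℝ)
    (hcondB : ∃ y : S → B → ℝ, IsStrategy y ∧ (∃ s s' : S, y s ≠ y s') ∧
      (∀ b : B, ∑ s, m s * u2 (s, b) ≤ Upay u2 (mu0 m) y) ∧
      ∀ μ : S × S → ℝ, IsCopula m μ → Upay u1 μ y ≤ Upay u1 (mu0 m) y)
    (ε : ℝ) (hε : 0 < ε) :
    ∃ (u1' u2' : S × B → ℝ) (y' : S → B → ℝ),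
      ‖u1' - u1‖ < ε ∧ ‖u2' - u2‖ < ε ∧ IsStrategy y' ∧
      (∀ b : B, ∑ s, m s * u2' (s, b) < Upay u2' (mu0 m) y') ∧
      ∀ μ : S × S → ℝ, IsCopula m μ → μ ≠ mu0 m →
        Upay u1' μ y' < Upay u1' (mu0 m) y' := by
  classical
  obtain ⟨y, ⟨hy0, hy1⟩, ⟨s₁, s₂, hys⟩, hyv2, hyu1⟩ := hcondB
  have hy_le1 : ∀ s b, y s b ≤ 1 := by
    intro s b
    calc y s b ≤ ∑ b', y s b' :=
          Finset.single_le_sum (fun b' _ => hy0 s b') (Finset.mem_univ b)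
      _ = 1 := hy1 s
  -- B has two distinct elements
  by_cases hBall : ∀ b b' : B, b = b'
  · exfalso
    apply hys
    funext b
    have hc : (0:ℝ) < (Fintype.card B : ℝ) := by
      exact_mod_cast Fintype.card_pos
    have key : ∀ s : S, (Fintype.card B : ℝ) * y s b = 1 := by
      intro s
      calc (Fintype.card B : ℝ) * y s b = ∑ _b' : B, y s b := by
            rw [Finset.sum_const, Finset.card_univ, nsmul_eq_mul]
        _ = ∑ b', y s b' := Finset.sum_congr rfl (fun x _ => by rw [hBall b x])
        _ = 1 := hy1 s
    have h1 := key s₁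
    have h2 := key s₂
    have := h1.trans h2.symm
    exact mul_left_cancel₀ (ne_of_gt hc) this
  push_neg at hBall
  obtain ⟨b₀, b₁, hb01⟩ := hBall
  have hSne : Nonempty S := Fintype.card_pos_iff.mp (by omega)
  set nB : ℝ := (Fintype.card B : ℝ) with hnBdef
  have hnB_pos : 0 < nB := by
    rw [hnBdef]
    have : 0 < Fintype.card B := Fintype.card_pos
    exact_mod_cast this
  -- an injective real-valued labeling of states
  set lam : S → ℝ := fun s => ((Fintype.equivFin S s : Fin (Fintype.card S)) : ℕ) with hlamdef
  have hlam_inj : ∀ s a : S, s ≠ a → lam s ≠ lam a := by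
    intro s a hsa h
    apply hsa
    simp only [hlamdef] at h
    have h2 : ((Fintype.equivFin S s : Fin (Fintype.card S)) : ℕ)
        = ((Fintype.equivFin S a : Fin (Fintype.card S)) : ℕ) := by exact_mod_cast h
    exact (Fintype.equivFin S).injective (Fin.ext h2)
  set Lam : ℝ := (Fintype.card S : ℝ) with hLamdef
  have hLam_pos : 0 < Lam := by
    rw [hLamdef]
    have : 0 < Fintype.card S := by omega
    exact_mod_cast this
  have hlam_nonneg : ∀ s, 0 ≤ lam s := fun s => by positivity
  have hlam_le : ∀ s, lam s ≤ Lam := by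
    intro s
    rw [hlamdef, hLamdef]
    have h1 := (Fintype.equivFin S s).isLt
    have h2 : ((Fintype.equivFin S s : Fin (Fintype.card S)) : ℕ) ≤ Fintype.card S :=
      le_of_lt h1
    show ((Fintype.equivFin S s : Fin (Fintype.card S)) : ℕ) ≤ ((Fintype.card S : ℕ) : ℝ)
    exact_mod_cast h2
  -- the action where y is non-constant
  have hbstar : ∃ bs : B, y s₁ bs ≠ y s₂ bs := by
    by_contra h
    push_neg at h
    exact hys (funext h)
  obtain ⟨bs, hbs⟩ := hbstar
  set pbar : B → ℝ := fun b => ∑ s, m s * y s b with hpbardef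
  have hterm_nonneg : ∀ b (s : S), 0 ≤ m s * y s b :=
    fun b s => mul_nonneg (hm s).le (hy0 s b)
  have hpbar_nonneg : ∀ b, 0 ≤ pbar b :=
    fun b => Finset.sum_nonneg (fun s _ => hterm_nonneg b s)
  have hpbar_ge : ∀ b (s : S), m s * y s b ≤ pbar b :=
    fun b s => Finset.single_le_sum (fun s' _ => hterm_nonneg b s') (Finset.mem_univ s)
  have hpbs : 0 < pbar bs := by
    rcases (hy0 s₁ bs).lt_or_eq with h | h
    · exact lt_of_lt_of_le (mul_pos (hm s₁) h) (hpbar_ge bs s₁)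
    · have h2 : 0 < y s₂ bs := by
        rcases (hy0 s₂ bs).lt_or_eq with h2 | h2
        · exact h2
        · exact absurd (h.symm.trans h2) hbs
      exact lt_of_lt_of_le (mul_pos (hm s₂) h2) (hpbar_ge bs s₂)
  have hpbar_zero : ∀ b, pbar b = 0 → ∀ s, y s b = 0 := by
    intro b hb s
    by_contra hy
    have h1 : 0 < m s * y s b := mul_pos (hm s) (lt_of_le_of_ne (hy0 s b) (Ne.symm hy))
    have := hpbar_ge b s
    rw [hb] at this
    linarith
  have hsum_pbar : ∑ b, pbar b = 1 := by
    rw [show (∑ b, pbar b) = ∑ b, ∑ s, m s * y s b from rfl, Finset.sum_comm]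
    calc ∑ s, ∑ b, m s * y s b = ∑ s, m s * ∑ b, y s b := by
          exact Finset.sum_congr rfl (fun s _ => (Finset.mul_sum _ _ _).symm)
      _ = ∑ s, m s := Finset.sum_congr rfl (fun s _ => by rw [hy1 s, mul_one])
      _ = 1 := hm1
  set ψ : S → B → ℝ := fun s b => y s b / pbar b with hψdef
  have hψ_nonneg : ∀ s b, 0 ≤ ψ s b := fun s b => div_nonneg (hy0 s b) (hpbar_nonneg b)
  set Cψ : ℝ := (∑ b, 1 / pbar b) + 1 with hCψdef
  have hinv_nonneg : ∀ b : B, 0 ≤ 1 / pbar b :=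
    fun b => div_nonneg zero_le_one (hpbar_nonneg b)
  have hCψ_pos : 0 < Cψ := by
    have : 0 ≤ ∑ b, 1 / pbar b := Finset.sum_nonneg (fun b _ => hinv_nonneg b)
    simp only [hCψdef]; linarith
  have hψ_le : ∀ s b, ψ s b ≤ Cψ := by
    intro s b
    have h1 : ψ s b ≤ 1 / pbar b := by
      rcases (hpbar_nonneg b).lt_or_eq with h | h
      · show y s b / pbar b ≤ 1 / pbar b
        exact div_le_div_of_nonneg_right (hy_le1 s b) h.le
      · show y s b / pbar b ≤ 1 / pbar b
        rw [← h, div_zero, div_zero]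
    calc ψ s b ≤ 1 / pbar b := h1
      _ ≤ ∑ b', 1 / pbar b' :=
          Finset.single_le_sum (fun b' _ => hinv_nonneg b') (Finset.mem_univ b)
      _ ≤ Cψ := by rw [hCψdef]; linarith
  set cψ : ℝ := (∑ s, m s * (y s bs - pbar bs)^2) / pbar bs with hcψdef
  have hsq_id : ∀ b : B, ∑ s, m s * (y s b)^2
      = pbar b ^ 2 + ∑ s, m s * (y s b - pbar b)^2 := by
    intro b
    have e : ∀ s : S, m s * (y s b - pbar b)^2
        = m s * (y s b)^2 - 2 * pbar b * (m s * y s b) + pbar b ^ 2 * m s := by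
      intro s; ring
    rw [Finset.sum_congr rfl (fun s _ => e s)]
    simp only [Finset.sum_add_distrib, Finset.sum_sub_distrib, ← Finset.mul_sum]
    rw [hm1]
    have hpb : ∑ s, m s * y s b = pbar b := rfl
    rw [hpb]
    ring
  have hcψ_pos : 0 < cψ := by
    rw [hcψdef]
    apply div_pos _ hpbs
    have hne : y s₁ bs ≠ pbar bs ∨ y s₂ bs ≠ pbar bs := by
      by_contra h
      push_neg at h
      exact hbs (h.1.trans h.2.symm)
    have hterm : ∀ s : S, 0 ≤ m s * (y s bs - pbar bs)^2 :=
      fun s => mul_nonneg (hm s).le (sq_nonneg _)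
    rcases hne with h | h
    · refine Finset.sum_pos' (fun s _ => hterm s) ⟨s₁, Finset.mem_univ s₁, ?_⟩
      have : y s₁ bs - pbar bs ≠ 0 := sub_ne_zero.mpr h
      exact mul_pos (hm s₁) (lt_of_le_of_ne (sq_nonneg _) (Ne.symm (pow_ne_zero 2 this)))
    · refine Finset.sum_pos' (fun s _ => hterm s) ⟨s₂, Finset.mem_univ s₂, ?_⟩
      have : y s₂ bs - pbar bs ≠ 0 := sub_ne_zero.mpr h
      exact mul_pos (hm s₂) (lt_of_le_of_ne (sq_nonneg _) (Ne.symm (pow_ne_zero 2 this)))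
  -- the key strict-improvement bound for player 2's payoff
  have hgap2 : ∀ b : B, ∑ s, m s * ψ s b + cψ ≤ ∑ s, m s * ∑ b', y s b' * ψ s b' := by
    intro b
    have hT1 : ∑ s, m s * ∑ b', y s b' * ψ s b'
        = ∑ b', (∑ s, m s * (y s b')^2) / pbar b' := by
      have e1 : ∀ s : S, m s * ∑ b', y s b' * ψ s b'
          = ∑ b', (m s * (y s b')^2) / pbar b' := by
        intro s
        rw [Finset.mul_sum]
        refine Finset.sum_congr rfl (fun b' _ => ?_)
        show m s * (y s b' * (y s b' / pbar b')) = m s * (y s b')^2 / pbar b'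
        ring
      rw [Finset.sum_congr rfl (fun s _ => e1 s), Finset.sum_comm]
      exact Finset.sum_congr rfl (fun b' _ => (Finset.sum_div _ _ _).symm)
    have hT2 : ∑ s, m s * ψ s b = pbar b / pbar b := by
      calc ∑ s, m s * ψ s b = ∑ s, (m s * y s b) / pbar b := by
            refine Finset.sum_congr rfl (fun s _ => ?_)
            show m s * (y s b / pbar b) = (m s * y s b) / pbar b
            ring
        _ = pbar b / pbar b := (Finset.sum_div _ _ _).symm
    have hT2le : ∑ s, m s * ψ s b ≤ 1 := by
      rw [hT2]
      rcases (hpbar_nonneg b).lt_or_eq with h | h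
      · rw [div_self (ne_of_gt h)]
      · rw [← h, div_zero]; linarith
    have hRge : ∀ b' : B, pbar b' + (if b' = bs then cψ else 0)
        ≤ (∑ s, m s * (y s b')^2) / pbar b' := by
      intro b'
      by_cases hbb : b' = bs
      · subst hbb
        simp only [if_pos rfl]
        rw [hsq_id b', hcψdef]
        rw [add_div]
        have : pbar b' ^ 2 / pbar b' = pbar b' := by
          rw [sq, mul_div_assoc, div_self (ne_of_gt hpbs), mul_one]
        rw [this]
        simp
      · simp only [if_neg hbb, add_zero]
        rcases (hpbar_nonneg b').lt_or_eq with h | h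
        · rw [hsq_id b', add_div]
          have e : pbar b' ^ 2 / pbar b' = pbar b' := by
            rw [sq, mul_div_assoc, div_self (ne_of_gt h), mul_one]
          rw [e]
          have : 0 ≤ (∑ s, m s * (y s b' - pbar b')^2) / pbar b' :=
            div_nonneg (Finset.sum_nonneg fun s _ => mul_nonneg (hm s).le (sq_nonneg _)) h.le
          linarith
        · have hz : ∀ s : S, y s b' = 0 := hpbar_zero b' h.symm
          have : (∑ s, m s * (y s b')^2) = 0 :=
            Finset.sum_eq_zero (fun s _ => by rw [hz s]; ring)
          rw [this, ← h, zero_div]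
    have hsum_ge : 1 + cψ ≤ ∑ b', (∑ s, m s * (y s b')^2) / pbar b' := by
      calc 1 + cψ = ∑ b', (pbar b' + (if b' = bs then cψ else 0)) := by
            rw [Finset.sum_add_distrib, hsum_pbar, Finset.sum_ite_eq' Finset.univ bs
              (fun _ => cψ), if_pos (Finset.mem_univ bs)]
        _ ≤ _ := Finset.sum_le_sum (fun b' _ => hRge b')
    rw [hT1]
    linarith
  -- player-2 perturbation
  set δ₂ : ℝ := ε / (2 * (Cψ + 1)) with hδ₂def
  have hδ₂_pos : 0 < δ₂ := by rw [hδ₂def]; positivity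
  set u2' : S × B → ℝ := fun q => u2 q + δ₂ * ψ q.1 q.2 with hu2'def
  set U2 : ℝ := (∑ s, ∑ b, |u2' (s, b)|) + 1 with hU2def
  have habs_nonneg : ∀ s : S, 0 ≤ ∑ b, |u2' (s, b)| :=
    fun s => Finset.sum_nonneg (fun b _ => abs_nonneg _)
  have hU2_bd : ∀ (s : S) (b : B), |u2' (s, b)| ≤ U2 := by
    intro s b
    calc |u2' (s, b)| ≤ ∑ b', |u2' (s, b')| :=
          Finset.single_le_sum (f := fun b' => |u2' (s, b')|)
            (fun b' _ => abs_nonneg _) (Finset.mem_univ b)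
      _ ≤ ∑ s', ∑ b', |u2' (s', b')| :=
          Finset.single_le_sum (f := fun s' => ∑ b', |u2' (s', b')|)
            (fun s' _ => habs_nonneg s') (Finset.mem_univ s)
      _ ≤ U2 := by rw [hU2def]; linarith
  have hU2_pos : 0 < U2 := by
    rw [hU2def]
    have : 0 ≤ ∑ s, ∑ b, |u2' (s, b)| := Finset.sum_nonneg (fun s _ => habs_nonneg s)
    linarith
  -- player-1 side: perturbation scales
  set δ₃ : ℝ := ε / 4 with hδ₃def
  have hδ₃_pos : 0 < δ₃ := by rw [hδ₃def]; positivity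
  set e₀ : B → ℝ := fun b => if b = b₀ then (1:ℝ) else 0 with he₀def
  have he₀_nonneg : ∀ b, 0 ≤ e₀ b := by
    intro b; rw [he₀def]; dsimp only; split <;> norm_num
  have he₀_le1 : ∀ b, e₀ b ≤ 1 := by
    intro b; rw [he₀def]; dsimp only; split <;> norm_num
  have hsum_e₀ : ∑ b, e₀ b = 1 := by
    rw [he₀def]
    rw [Finset.sum_ite_eq' Finset.univ b₀ (fun _ => (1:ℝ))]
    exact if_pos (Finset.mem_univ b₀)
  -- centering operator
  set Pc : (B → ℝ) → B → ℝ := fun f b => f b - (∑ b', f b') / nB with hPcdef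
  have hPc_sum : ∀ f : B → ℝ, ∑ b, Pc f b = 0 := by
    intro f
    rw [hPcdef]
    dsimp only
    rw [Finset.sum_sub_distrib, Finset.sum_const, Finset.card_univ, nsmul_eq_mul]
    rw [hnBdef]
    field_simp
    ring
  have hPc_e₀ : Pc e₀ b₁ = -(1 / nB) := by
    rw [hPcdef]
    dsimp only
    rw [hsum_e₀, he₀def]
    dsimp only
    rw [if_neg (Ne.symm hb01)]
    ring
  set v' : S → S → B → ℝ := fun s a b => u1 (s, b) - u1 (a, b) + δ₃ * (y s b - y a b)
    with hv'def
  set δbad : S × S → ℝ := fun p => nB * Pc (v' p.1 p.2) b₁ / (lam p.1 - lam p.2) with hδbaddef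
  set Fpair : S × S → ℝ := fun p => if y p.1 b₀ - y p.2 b₀ = 0 then 1
      else δ₃ * |y p.1 b₀ - y p.2 b₀| / (2 * (Lam + 1)) with hFpairdef
  have hFpair_pos : ∀ p : S × S, 0 < Fpair p := by
    intro p
    rw [hFpairdef]
    dsimp only
    split
    · norm_num
    · rename_i hne
      have : 0 < |y p.1 b₀ - y p.2 b₀| := abs_pos.mpr hne
      positivity
  have hSSne : (Finset.univ : Finset (S × S)).Nonempty := Finset.univ_nonempty
  set Fmin : ℝ := (Finset.univ.image Fpair).min' (hSSne.image Fpair) with hFmindef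
  have hFmin_pos : 0 < Fmin := by
    obtain ⟨p, _, hp⟩ := Finset.mem_image.mp ((Finset.univ.image Fpair).min'_mem
      (hSSne.image Fpair))
    rw [hFmindef] at *
    rw [← hp]
    exact hFpair_pos p
  have hFmin_le : ∀ p : S × S, Fmin ≤ Fpair p := by
    intro p
    exact Finset.min'_le _ _ (Finset.mem_image_of_mem Fpair (Finset.mem_univ p))
  set δmax : ℝ := min (ε / (4 * (Lam + 1))) Fmin with hδmaxdef
  have hδmax_pos : 0 < δmax := by
    rw [hδmaxdef]
    apply lt_min _ hFmin_pos
    positivity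
  -- choose δ₁ avoiding the bad set
  have hδ₁ex : ∃ d : ℝ, d ∈ Set.Ioo (0:ℝ) δmax \ Set.range δbad :=
    ((Set.Ioo_infinite hδmax_pos).diff (Set.finite_range δbad)).nonempty
  obtain ⟨δ₁, hδ₁mem⟩ := hδ₁ex
  obtain ⟨⟨hδ₁_pos, hδ₁_lt⟩, hδ₁_nr⟩ := hδ₁mem
  have hδ₁_Fmin : δ₁ ≤ Fmin := le_trans hδ₁_lt.le (by rw [hδmaxdef]; exact min_le_right _ _)
  have hδ₁_eps : δ₁ ≤ ε / (4 * (Lam + 1)) :=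
    le_trans hδ₁_lt.le (by rw [hδmaxdef]; exact min_le_left _ _)
  -- the perturbed payoff of player 1
  set u1'f : S × B → ℝ := fun q => u1 q + δ₃ * y q.1 q.2 + δ₁ * lam q.1 * e₀ q.2
    with hu1'def
  set w : S → B → ℝ := fun s b => u1'f (s, b) with hwdef
  have hw_split : ∀ s a b, Pc (w s) b - Pc (w a) b
      = Pc (v' s a) b + δ₁ * (lam s - lam a) * Pc e₀ b := by
    intro s a b
    have h1 : ∀ b' : B, w s b' - w a b' = v' s a b' + δ₁ * (lam s - lam a) * e₀ b' := by
      intro b'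
      show (u1 (s, b') + δ₃ * y s b' + δ₁ * lam s * e₀ b')
          - (u1 (a, b') + δ₃ * y a b' + δ₁ * lam a * e₀ b')
        = (u1 (s, b') - u1 (a, b') + δ₃ * (y s b' - y a b'))
          + δ₁ * (lam s - lam a) * e₀ b'
      ring
    have hsum : ∑ b', w s b' - ∑ b', w a b'
        = (∑ b', v' s a b') + δ₁ * (lam s - lam a) * ∑ b', e₀ b' := by
      rw [← Finset.sum_sub_distrib, Finset.mul_sum, ← Finset.sum_add_distrib]
      exact Finset.sum_congr rfl (fun b' _ => h1 b')
    show (w s b - (∑ b', w s b') / nB) - (w a b - (∑ b', w a b') / nB)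
      = (v' s a b - (∑ b', v' s a b') / nB)
        + δ₁ * (lam s - lam a) * (e₀ b - (∑ b', e₀ b') / nB)
    have h2 := h1 b
    linear_combination h2 - (1 / nB) * hsum
  -- all centered rows of w are distinct
  have hMpos : ∀ s a : S, s ≠ a → 0 < ∑ b, (Pc (w s) b - Pc (w a) b)^2 := by
    intro s a hsa
    have hb₁ : Pc (w s) b₁ - Pc (w a) b₁ ≠ 0 := by
      rw [hw_split s a b₁, hPc_e₀]
      intro h0
      apply hδ₁_nr
      refine ⟨(s, a), ?_⟩
      have hlamne : lam s - lam a ≠ 0 := sub_ne_zero.mpr (hlam_inj s a hsa)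
      rw [hδbaddef]
      dsimp only
      rw [div_eq_iff hlamne]
      have hnBne : nB ≠ 0 := ne_of_gt hnB_pos
      field_simp at h0
      linarith [h0]
    refine Finset.sum_pos' (fun b _ => sq_nonneg _) ⟨b₁, Finset.mem_univ b₁, ?_⟩
    exact lt_of_le_of_ne (sq_nonneg _) (Ne.symm (pow_ne_zero 2 hb₁))
  -- minimal separation
  have hpairne : ∃ p : S × S, p.1 ≠ p.2 := by
    obtain ⟨a, b, hab⟩ := Fintype.exists_pair_of_one_lt_card hS
    exact ⟨(a, b), hab⟩
  obtain ⟨p₀, hp₀⟩ := hpairne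
  have hfilterne : (Finset.univ.filter (fun p : S × S => p.1 ≠ p.2)).Nonempty :=
    ⟨p₀, Finset.mem_filter.mpr ⟨Finset.mem_univ p₀, hp₀⟩⟩
  set Mfun : S × S → ℝ := fun p => ∑ b, (Pc (w p.1) b - Pc (w p.2) b)^2 with hMfundef
  set M₀ : ℝ := ((Finset.univ.filter (fun p : S × S => p.1 ≠ p.2)).image Mfun).min'
    (hfilterne.image Mfun) with hM₀def
  have hM₀_pos : 0 < M₀ := by
    obtain ⟨p, hpmem, hp⟩ := Finset.mem_image.mp
      (((Finset.univ.filter (fun p : S × S => p.1 ≠ p.2)).image Mfun).min'_mem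
        (hfilterne.image Mfun))
    rw [hM₀def, ← hp]
    exact hMpos p.1 p.2 (Finset.mem_filter.mp hpmem).2
  have hM₀_le : ∀ s a : S, s ≠ a → M₀ ≤ ∑ b, (Pc (w s) b - Pc (w a) b)^2 := by
    intro s a hsa
    exact Finset.min'_le _ _ (Finset.mem_image_of_mem Mfun
      (Finset.mem_filter.mpr ⟨Finset.mem_univ (s, a), hsa⟩))
  -- bound on centered rows, and the auxiliary strategy r
  set W : ℝ := ∑ s, ∑ b, |Pc (w s) b| with hWdef
  have hWrow_nonneg : ∀ s : S, 0 ≤ ∑ b, |Pc (w s) b| :=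
    fun s => Finset.sum_nonneg (fun b _ => abs_nonneg _)
  have hW_nonneg : 0 ≤ W := Finset.sum_nonneg (fun s _ => hWrow_nonneg s)
  have hW_bd : ∀ (s : S) (b : B), |Pc (w s) b| ≤ W := by
    intro s b
    calc |Pc (w s) b| ≤ ∑ b', |Pc (w s) b'| :=
          Finset.single_le_sum (f := fun b' => |Pc (w s) b'|)
            (fun b' _ => abs_nonneg _) (Finset.mem_univ b)
      _ ≤ W :=
          Finset.single_le_sum (f := fun s' => ∑ b', |Pc (w s') b'|)
            (fun s' _ => hWrow_nonneg s') (Finset.mem_univ s)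
  set γ : ℝ := 1 / (nB * (1 + W)) with hγdef
  have hγ_pos : 0 < γ := by rw [hγdef]; positivity
  have hγW : γ * W ≤ 1 / nB := by
    rw [hγdef, div_mul_eq_mul_div, one_mul, div_le_div_iff₀ (by positivity) hnB_pos]
    have h1 : (0:ℝ) < nB := hnB_pos
    linarith [mul_nonneg hW_nonneg hnB_pos.le]
  set r : S → B → ℝ := fun s b => 1 / nB + γ * Pc (w s) b with hrdef
  have hr_nonneg : ∀ s b, 0 ≤ r s b := by
    intro s b
    have h1 : γ * Pc (w s) b ≥ -(γ * W) := by
      have h2 : -W ≤ Pc (w s) b := neg_le_of_abs_le (hW_bd s b)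
      have h3 := mul_le_mul_of_nonneg_left h2 hγ_pos.le
      rw [mul_neg] at h3
      exact h3
    have h4 : (0:ℝ) ≤ 1 / nB - γ * W := sub_nonneg.mpr hγW
    have h5 : 1 / nB - γ * W ≤ 1 / nB + γ * Pc (w s) b := by
      have h6 : -(γ * W) ≤ γ * Pc (w s) b := h1
      generalize hA : γ * Pc (w s) b = A at h6 ⊢
      generalize hBv : γ * W = Bv at h6 ⊢
      linarith [h6]
    show 0 ≤ 1 / nB + γ * Pc (w s) b
    exact le_trans h4 h5
  have hr_sum : ∀ s, ∑ b, r s b = 1 := by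
    intro s
    show ∑ b, (1 / nB + γ * Pc (w s) b) = 1
    rw [Finset.sum_add_distrib, ← Finset.mul_sum, hPc_sum, mul_zero, add_zero,
      Finset.sum_const, Finset.card_univ, nsmul_eq_mul, hnBdef]
    field_simp
  -- mixing weight
  set t : ℝ := min (1/2) (δ₂ * cψ / (8 * U2)) with htdef
  have ht_pos : 0 < t := by
    rw [htdef]
    apply lt_min (by norm_num)
    positivity
  have ht_half : t ≤ 1/2 := by rw [htdef]; exact min_le_left _ _
  have ht_bd : t * (2 * U2) ≤ δ₂ * cψ / 4 := by
    have h1 : t ≤ δ₂ * cψ / (8 * U2) := by rw [htdef]; exact min_le_right _ _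
    have h2 : t * (2 * U2) ≤ (δ₂ * cψ / (8 * U2)) * (2 * U2) :=
      mul_le_mul_of_nonneg_right h1 (by positivity)
    calc t * (2 * U2) ≤ (δ₂ * cψ / (8 * U2)) * (2 * U2) := h2
      _ = δ₂ * cψ / 4 := by field_simp; ring
  -- the final strategy
  set y' : S → B → ℝ := fun s b => (1 - t) * y s b + t * r s b with hy'def
  have hy'_strategy : IsStrategy y' := by
    constructor
    · intro a b
      show 0 ≤ (1 - t) * y a b + t * r a b
      have h1 : 0 ≤ (1 - t) * y a b := mul_nonneg (by linarith) (hy0 a b)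
      have h2 : 0 ≤ t * r a b := mul_nonneg ht_pos.le (hr_nonneg a b)
      linarith
    · intro a
      show ∑ b, ((1 - t) * y a b + t * r a b) = 1
      rw [Finset.sum_add_distrib, ← Finset.mul_sum, ← Finset.mul_sum, hy1 a, hr_sum a]
      ring
  -- pointwise identities (by definitional unfolding), recorded before we make
  -- the local definitions opaque
  have hu2'q : ∀ (s : S) (b : B), u2' (s, b) = u2 (s, b) + δ₂ * ψ s b := fun s b => rfl
  have hu1'q : ∀ (s : S) (b : B),
      u1'f (s, b) = u1 (s, b) + δ₃ * y s b + δ₁ * lam s * e₀ b := fun s b => rfl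
  have hy'ab : ∀ (s : S) (b : B), y' s b = (1 - t) * y s b + t * r s b := fun s b => rfl
  have hψq : ∀ (s : S) (b : B), ψ s b = y s b / pbar b := fun s b => rfl
  -- the main pointwise decomposition for player 1
  have hF : ∀ s a : S,
      (∑ b, y' s b * u1'f (s, b)) - (∑ b, y' a b * u1'f (s, b))
        = (1 - t) * (∑ b, (y s b - y a b) * w s b)
          + (t * γ) * (∑ b, (Pc (w s) b - Pc (w a) b) * Pc (w s) b) := by
    intro s a
    have h1 : ∀ b : B, y' s b * u1'f (s, b) - y' a b * u1'f (s, b)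
        = (1 - t) * ((y s b - y a b) * w s b)
          + (t * γ) * ((Pc (w s) b - Pc (w a) b) * w s b) := by
      intro b
      show ((1 - t) * y s b + t * (1 / nB + γ * Pc (w s) b)) * w s b
          - ((1 - t) * y a b + t * (1 / nB + γ * Pc (w a) b)) * w s b
        = (1 - t) * ((y s b - y a b) * w s b)
          + (t * γ) * ((Pc (w s) b - Pc (w a) b) * w s b)
      ring
    have h2 : ∑ b, (Pc (w s) b - Pc (w a) b) * w s b
        = ∑ b, (Pc (w s) b - Pc (w a) b) * Pc (w s) b := by
      have h3 : ∀ b : B, (Pc (w s) b - Pc (w a) b) * w s b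
          = (Pc (w s) b - Pc (w a) b) * Pc (w s) b
            + ((∑ b', w s b') / nB) * (Pc (w s) b - Pc (w a) b) := by
        intro b
        show (Pc (w s) b - Pc (w a) b) * w s b
          = (Pc (w s) b - Pc (w a) b) * (w s b - (∑ b', w s b') / nB)
            + ((∑ b', w s b') / nB) * (Pc (w s) b - Pc (w a) b)
        ring
      rw [Finset.sum_congr rfl (fun b _ => h3 b), Finset.sum_add_distrib,
        ← Finset.mul_sum, Finset.sum_sub_distrib, hPc_sum, hPc_sum]
      ring
    rw [← Finset.sum_sub_distrib, Finset.sum_congr rfl (fun b _ => h1 b),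
      Finset.sum_add_distrib, ← Finset.mul_sum, ← Finset.mul_sum, h2]
  -- decomposition of the base part
  have hXsplit : ∀ s a : S, ∑ b, (y s b - y a b) * w s b
      = ((∑ b, y s b * u1 (s, b)) - (∑ b, y a b * u1 (s, b)))
        + δ₃ * (∑ b, (y s b - y a b) * y s b)
        + δ₁ * (lam s * (y s b₀ - y a b₀)) := by
    intro s a
    have h1 : ∀ b : B, (y s b - y a b) * w s b
        = (y s b * u1 (s, b) - y a b * u1 (s, b))
          + δ₃ * ((y s b - y a b) * y s b)
          + (δ₁ * lam s) * ((y s b - y a b) * e₀ b) := by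
      intro b
      show (y s b - y a b) * (u1 (s, b) + δ₃ * y s b + δ₁ * lam s * e₀ b)
        = (y s b * u1 (s, b) - y a b * u1 (s, b))
          + δ₃ * ((y s b - y a b) * y s b)
          + (δ₁ * lam s) * ((y s b - y a b) * e₀ b)
      ring
    have h2 : ∑ b, (y s b - y a b) * e₀ b = y s b₀ - y a b₀ := by
      have h3 : ∀ b : B, (y s b - y a b) * e₀ b
          = if b = b₀ then y s b - y a b else 0 := by
        intro b
        show (y s b - y a b) * (if b = b₀ then (1:ℝ) else 0) = _
        split <;> ring
      rw [Finset.sum_congr rfl (fun b _ => h3 b),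
        Finset.sum_ite_eq' Finset.univ b₀ (fun b => y s b - y a b),
        if_pos (Finset.mem_univ b₀)]
    rw [Finset.sum_congr rfl (fun b _ => h1 b), Finset.sum_add_distrib,
      Finset.sum_add_distrib, Finset.sum_sub_distrib, ← Finset.mul_sum,
      ← Finset.mul_sum, h2]
    ring
  -- make everything opaque from now on
  clear_value y' t r γ W M₀ Mfun w u1'f δmax Fmin Fpair δbad v' Pc e₀ δ₃ U2 u2' δ₂ cψ Cψ ψ pbar Lam lam nB
  -- per-pair positivity bracket
  have hbracket : ∀ s a : S,
      0 ≤ δ₃ * ((∑ b, (y s b - y a b)^2) / 2) + δ₁ * (lam s * (y s b₀ - y a b₀)) := by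
    intro s a
    have hN : 0 ≤ ∑ b, (y s b - y a b)^2 := Finset.sum_nonneg (fun b _ => sq_nonneg _)
    by_cases hΔ : y s b₀ - y a b₀ = 0
    · have hz : δ₁ * (lam s * (y s b₀ - y a b₀)) = 0 := by rw [hΔ]; ring
      have h1 : 0 ≤ δ₃ * ((∑ b, (y s b - y a b)^2) / 2) :=
        mul_nonneg hδ₃_pos.le (by linarith)
      linarith
    · have h1 : δ₁ ≤ Fpair (s, a) := le_trans hδ₁_Fmin (hFmin_le (s, a))
      have h2 : Fpair (s, a) = δ₃ * |y s b₀ - y a b₀| / (2 * (Lam + 1)) := by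
        rw [hFpairdef]
        exact if_neg hΔ
      have habs : 0 < |y s b₀ - y a b₀| := abs_pos.mpr hΔ
      have h3 : |lam s * (y s b₀ - y a b₀)| ≤ Lam * |y s b₀ - y a b₀| := by
        rw [abs_mul]
        apply mul_le_mul_of_nonneg_right _ (abs_nonneg _)
        rw [abs_of_nonneg (hlam_nonneg s)]
        exact hlam_le s
      have h4 : δ₁ * (Lam * |y s b₀ - y a b₀|)
          ≤ (δ₃ * |y s b₀ - y a b₀| / (2 * (Lam + 1))) * (Lam * |y s b₀ - y a b₀|) := by
        apply mul_le_mul_of_nonneg_right (h1.trans_eq h2)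
        positivity
      have h5 : (δ₃ * |y s b₀ - y a b₀| / (2 * (Lam + 1))) * (Lam * |y s b₀ - y a b₀|)
          ≤ δ₃ * (|y s b₀ - y a b₀| * |y s b₀ - y a b₀|) / 2 := by
        rw [div_mul_eq_mul_div, div_le_div_iff₀ (by positivity) (by norm_num : (0:ℝ) < 2)]
        have hp : 0 < δ₃ * (|y s b₀ - y a b₀| * |y s b₀ - y a b₀|) :=
          mul_pos hδ₃_pos (mul_pos habs habs)
        linarith [hp]
      have h6 : |y s b₀ - y a b₀| * |y s b₀ - y a b₀| = (y s b₀ - y a b₀)^2 := by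
        rw [abs_mul_abs_self]; ring
      have h7 : (y s b₀ - y a b₀)^2 ≤ ∑ b, (y s b - y a b)^2 :=
        Finset.single_le_sum (f := fun b => (y s b - y a b)^2)
          (fun b _ => sq_nonneg _) (Finset.mem_univ b₀)
      have h8 : -|lam s * (y s b₀ - y a b₀)| ≤ lam s * (y s b₀ - y a b₀) := neg_abs_le _
      have h9 : δ₁ * -|lam s * (y s b₀ - y a b₀)| ≤ δ₁ * (lam s * (y s b₀ - y a b₀)) :=
        mul_le_mul_of_nonneg_left h8 hδ₁_pos.le
      have h10 : δ₁ * |lam s * (y s b₀ - y a b₀)| ≤ δ₁ * (Lam * |y s b₀ - y a b₀|) :=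
        mul_le_mul_of_nonneg_left h3 hδ₁_pos.le
      have h11 : δ₃ * (y s b₀ - y a b₀)^2 ≤ δ₃ * ∑ b, (y s b - y a b)^2 :=
        mul_le_mul_of_nonneg_left h7 hδ₃_pos.le
      rw [h6] at h5
      linarith
  -- conclusion
  refine ⟨u1'f, u2', y', ?_, ?_, hy'_strategy, ?_, ?_⟩
  · -- ‖u1' - u1‖ < ε
    refine (pi_norm_lt_iff hε).2 (fun q => ?_)
    obtain ⟨s, b⟩ := q
    have he : (u1'f - u1) (s, b) = δ₃ * y s b + δ₁ * lam s * e₀ b := by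
      rw [Pi.sub_apply, hu1'q s b]; ring
    rw [he, Real.norm_eq_abs]
    have h1 : 0 ≤ δ₃ * y s b := mul_nonneg hδ₃_pos.le (hy0 s b)
    have h2 : 0 ≤ δ₁ * lam s * e₀ b :=
      mul_nonneg (mul_nonneg hδ₁_pos.le (hlam_nonneg s)) (he₀_nonneg b)
    rw [abs_of_nonneg (by linarith)]
    have h3 : δ₃ * y s b ≤ δ₃ := by
      have := mul_le_mul_of_nonneg_left (hy_le1 s b) hδ₃_pos.le
      linarith
    have h4 : δ₁ * lam s * e₀ b ≤ δ₁ * Lam := by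
      have h5 : δ₁ * lam s * e₀ b ≤ δ₁ * lam s * 1 :=
        mul_le_mul_of_nonneg_left (he₀_le1 b) (mul_nonneg hδ₁_pos.le (hlam_nonneg s))
      have h6 : δ₁ * lam s ≤ δ₁ * Lam := mul_le_mul_of_nonneg_left (hlam_le s) hδ₁_pos.le
      linarith
    have h7 : δ₁ * Lam < ε / 4 := by
      have h8 : δ₁ * Lam ≤ (ε / (4 * (Lam + 1))) * Lam :=
        mul_le_mul_of_nonneg_right hδ₁_eps hLam_pos.le
      have h9 : (ε / (4 * (Lam + 1))) * Lam < ε / 4 := by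
        rw [div_mul_eq_mul_div, div_lt_div_iff₀ (by positivity) (by norm_num : (0:ℝ) < 4)]
        have hp : 0 < ε * Lam := mul_pos hε hLam_pos
        linarith [hp]
      linarith
    have h10 : δ₃ = ε / 4 := hδ₃def
    linarith
  · -- ‖u2' - u2‖ < ε
    refine (pi_norm_lt_iff hε).2 (fun q => ?_)
    obtain ⟨s, b⟩ := q
    have he : (u2' - u2) (s, b) = δ₂ * ψ s b := by
      rw [Pi.sub_apply, hu2'q s b]; ring
    rw [he, Real.norm_eq_abs]
    have h1 : 0 ≤ δ₂ * ψ s b := mul_nonneg hδ₂_pos.le (hψ_nonneg s b)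
    rw [abs_of_nonneg h1]
    have h2 : δ₂ * ψ s b ≤ δ₂ * Cψ := mul_le_mul_of_nonneg_left (hψ_le s b) hδ₂_pos.le
    have h3 : δ₂ * (Cψ + 1) = ε / 2 := by
      rw [hδ₂def]
      field_simp
    have h4 : δ₂ * (Cψ + 1) = δ₂ * Cψ + δ₂ := by ring
    linarith
  · -- player 2 strict inequality
    intro b
    rw [Upay_mu0 m u2' y']
    have hexp : ∑ s, m s * ∑ b', y' s b' * u2' (s, b')
        = (1 - t) * (∑ s, m s * ∑ b', y s b' * u2' (s, b'))
          + t * (∑ s, m s * ∑ b', r s b' * u2' (s, b')) := by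
      rw [Finset.mul_sum, Finset.mul_sum, ← Finset.sum_add_distrib]
      refine Finset.sum_congr rfl (fun s _ => ?_)
      have hsplit : ∑ b', y' s b' * u2' (s, b')
          = (1 - t) * (∑ b', y s b' * u2' (s, b'))
            + t * (∑ b', r s b' * u2' (s, b')) := by
        rw [Finset.mul_sum, Finset.mul_sum, ← Finset.sum_add_distrib]
        refine Finset.sum_congr rfl (fun b' _ => ?_)
        rw [hy'ab s b']; ring
      rw [hsplit]; ring
    have hyA : ∑ s, m s * u2' (s, b) + δ₂ * cψ
        ≤ ∑ s, m s * ∑ b', y s b' * u2' (s, b') := by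
      have e2 : ∑ s, m s * ∑ b', y s b' * u2' (s, b')
          = (∑ s, m s * ∑ b', y s b' * u2 (s, b'))
            + δ₂ * (∑ s, m s * ∑ b', y s b' * ψ s b') := by
        rw [Finset.mul_sum, ← Finset.sum_add_distrib]
        refine Finset.sum_congr rfl (fun s _ => ?_)
        have e1 : ∑ b', y s b' * u2' (s, b')
            = (∑ b', y s b' * u2 (s, b')) + δ₂ * (∑ b', y s b' * ψ s b') := by
          rw [Finset.mul_sum, ← Finset.sum_add_distrib]
          refine Finset.sum_congr rfl (fun b' _ => ?_)
          rw [hu2'q s b']; ring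
        rw [e1]; ring
      have e3 : ∑ s, m s * u2' (s, b)
          = (∑ s, m s * u2 (s, b)) + δ₂ * (∑ s, m s * ψ s b) := by
        rw [Finset.mul_sum, ← Finset.sum_add_distrib]
        refine Finset.sum_congr rfl (fun s _ => ?_)
        rw [hu2'q s b]; ring
      have h1 := hyv2 b
      rw [Upay_mu0 m u2 y] at h1
      have h2 := mul_le_mul_of_nonneg_left (hgap2 b) hδ₂_pos.le
      rw [e2, e3]
      have h3 : δ₂ * ((∑ s, m s * ψ s b) + cψ) = δ₂ * (∑ s, m s * ψ s b) + δ₂ * cψ := by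
        ring
      linarith [h2, h1]
    have hrB : -U2 ≤ ∑ s, m s * ∑ b', r s b' * u2' (s, b') := by
      have e1 : ∀ s : S, -U2 ≤ ∑ b', r s b' * u2' (s, b') := by
        intro s
        have h1 : ∀ b' : B, r s b' * (-U2) ≤ r s b' * u2' (s, b') := by
          intro b'
          apply mul_le_mul_of_nonneg_left _ (hr_nonneg s b')
          have := hU2_bd s b'
          have := neg_abs_le (u2' (s, b'))
          linarith
        calc -U2 = (∑ b', r s b') * (-U2) := by rw [hr_sum s, one_mul]
          _ = ∑ b', r s b' * (-U2) := Finset.sum_mul _ _ _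
          _ ≤ ∑ b', r s b' * u2' (s, b') := Finset.sum_le_sum (fun b' _ => h1 b')
      calc -U2 = (∑ s, m s) * (-U2) := by rw [hm1, one_mul]
        _ = ∑ s, m s * (-U2) := Finset.sum_mul _ _ _
        _ ≤ ∑ s, m s * ∑ b', r s b' * u2' (s, b') :=
            Finset.sum_le_sum (fun s _ => mul_le_mul_of_nonneg_left (e1 s) (hm s).le)
    have hLle : ∑ s, m s * u2' (s, b) ≤ U2 := by
      calc ∑ s, m s * u2' (s, b) ≤ ∑ s, m s * U2 :=
            Finset.sum_le_sum (fun s _ => mul_le_mul_of_nonneg_left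
              (le_trans (le_abs_self _) (hU2_bd s b)) (hm s).le)
        _ = (∑ s, m s) * U2 := (Finset.sum_mul _ _ _).symm
        _ = U2 := by rw [hm1, one_mul]
    rw [hexp]
    have f1 : t * (-U2) ≤ t * (∑ s, m s * ∑ b', r s b' * u2' (s, b')) :=
      mul_le_mul_of_nonneg_left hrB ht_pos.le
    have f2 : (1 - t) * (∑ s, m s * u2' (s, b) + δ₂ * cψ)
        ≤ (1 - t) * (∑ s, m s * ∑ b', y s b' * u2' (s, b')) :=
      mul_le_mul_of_nonneg_left hyA (by linarith)
    have f3 : t * (∑ s, m s * u2' (s, b)) ≤ t * U2 :=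
      mul_le_mul_of_nonneg_left hLle ht_pos.le
    have f4 : t * (δ₂ * cψ) ≤ (1/2) * (δ₂ * cψ) :=
      mul_le_mul_of_nonneg_right ht_half (by positivity)
    have hpos : 0 < δ₂ * cψ := mul_pos hδ₂_pos hcψ_pos
    have g2 : (1 - t) * (∑ s, m s * u2' (s, b) + δ₂ * cψ)
        = ∑ s, m s * u2' (s, b) - t * (∑ s, m s * u2' (s, b))
          + (δ₂ * cψ - t * (δ₂ * cψ)) := by ring
    have g3 : t * (2 * U2) = t * U2 + t * U2 := by ring
    linarith [f1, f2, f3, f4, hpos, ht_bd, g2, g3]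
  · -- player 1 strict inequality
    intro μ hcop hμne
    obtain ⟨hμ0, hμsum, hμ3, hμ4⟩ := hcop
    -- there is positive off-diagonal mass
    have hzero_off : ¬ (∀ s a : S, s ≠ a → μ (s, a) = 0) := by
      intro hz
      apply hμne
      funext q
      obtain ⟨s, a⟩ := q
      show μ (s, a) = mu0 m (s, a)
      by_cases hsa : s = a
      · subst hsa
        have : ∑ a, μ (s, a) = μ (s, s) :=
          Finset.sum_eq_single_of_mem s (Finset.mem_univ s)
            (fun a _ hne => hz s a (Ne.symm hne))
        have h2 := hμ3 s
        simp only [mu0, if_pos rfl]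
        rw [this] at h2
        exact h2
      · simp only [mu0]
        rw [if_neg hsa]
        exact hz s a hsa
    push_neg at hzero_off
    obtain ⟨sx, ax, hsax, hμx⟩ := hzero_off
    have hμxpos : 0 < μ (sx, ax) := lt_of_le_of_ne (hμ0 (sx, ax)) (Ne.symm hμx)
    -- rewrite both payoffs
    rw [Upay_mu0 m u1'f y']
    have hU : Upay u1'f μ y' = ∑ s, ∑ a, μ (s, a) * ∑ b, y' a b * u1'f (s, b) := rfl
    rw [hU]
    have key := sum_diag_sub m μ hμ3 (fun s a => ∑ b, y' a b * u1'f (s, b))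
    try dsimp only at key
    -- decompose the gap
    have e1 : (∑ s, ∑ a, μ (s, a) * ((∑ b, y' s b * u1'f (s, b)) - ∑ b, y' a b * u1'f (s, b)))
        = (1 - t) * (∑ s, ∑ a, μ (s, a) * (∑ b, (y s b - y a b) * w s b))
          + (t * γ) * (∑ s, ∑ a, μ (s, a)
              * (∑ b, (Pc (w s) b - Pc (w a) b) * Pc (w s) b)) := by
      rw [Finset.mul_sum, Finset.mul_sum, ← Finset.sum_add_distrib]
      refine Finset.sum_congr rfl (fun s _ => ?_)
      rw [Finset.mul_sum, Finset.mul_sum, ← Finset.sum_add_distrib]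
      refine Finset.sum_congr rfl (fun a _ => ?_)
      rw [hF s a]; ring
    -- the base part is nonnegative
    have hG1 : 0 ≤ ∑ s, ∑ a, μ (s, a) * (∑ b, (y s b - y a b) * w s b) := by
      have e2 : (∑ s, ∑ a, μ (s, a) * (∑ b, (y s b - y a b) * w s b))
          = (∑ s, ∑ a, μ (s, a)
              * ((∑ b, y s b * u1 (s, b)) - ∑ b, y a b * u1 (s, b)))
            + ((∑ s, ∑ a, μ (s, a) * (∑ b, (y s b - y a b) * y s b)) * δ₃
              + (∑ s, ∑ a, μ (s, a) * (lam s * (y s b₀ - y a b₀))) * δ₁) := by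
        rw [Finset.sum_mul, Finset.sum_mul, ← Finset.sum_add_distrib,
          ← Finset.sum_add_distrib]
        refine Finset.sum_congr rfl (fun s _ => ?_)
        rw [Finset.sum_mul, Finset.sum_mul, ← Finset.sum_add_distrib,
          ← Finset.sum_add_distrib]
        refine Finset.sum_congr rfl (fun a _ => ?_)
        rw [hXsplit s a]; ring
      have hT0 : 0 ≤ ∑ s, ∑ a, μ (s, a)
          * ((∑ b, y s b * u1 (s, b)) - ∑ b, y a b * u1 (s, b)) := by
        have h0 := hyu1 μ ⟨hμ0, hμsum, hμ3, hμ4⟩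
        rw [Upay_mu0 m u1 y] at h0
        have hU0 : Upay u1 μ y = ∑ s, ∑ a, μ (s, a) * ∑ b, y a b * u1 (s, b) := rfl
        rw [hU0] at h0
        have key0 := sum_diag_sub m μ hμ3 (fun s a => ∑ b, y a b * u1 (s, b))
        try dsimp only at key0
        linarith
      have hq1 := quad_identity m μ hμ3 hμ4 y
      have hT12 : 0 ≤ (∑ s, ∑ a, μ (s, a) * (∑ b, (y s b - y a b) * y s b)) * δ₃
          + (∑ s, ∑ a, μ (s, a) * (lam s * (y s b₀ - y a b₀))) * δ₁ := by
        rw [hq1]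
        have e3 : (∑ s, ∑ a, μ (s, a) * ((∑ b, (y s b - y a b)^2) / 2)) * δ₃
              + (∑ s, ∑ a, μ (s, a) * (lam s * (y s b₀ - y a b₀))) * δ₁
            = ∑ s, ∑ a, μ (s, a) * (δ₃ * ((∑ b, (y s b - y a b)^2) / 2)
                + δ₁ * (lam s * (y s b₀ - y a b₀))) := by
          rw [Finset.sum_mul, Finset.sum_mul, ← Finset.sum_add_distrib]
          refine Finset.sum_congr rfl (fun s _ => ?_)
          rw [Finset.sum_mul, Finset.sum_mul, ← Finset.sum_add_distrib]
          refine Finset.sum_congr rfl (fun a _ => ?_)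
          ring
        rw [e3]
        refine Finset.sum_nonneg (fun s _ => Finset.sum_nonneg (fun a _ => ?_))
        exact mul_nonneg (hμ0 (s, a)) (hbracket s a)
      rw [e2]
      linarith
    -- the quadratic part is strictly positive
    have hG2 : 0 < ∑ s, ∑ a, μ (s, a)
        * (∑ b, (Pc (w s) b - Pc (w a) b) * Pc (w s) b) := by
      have hq := quad_identity m μ hμ3 hμ4 (fun s => Pc (w s))
      try dsimp only at hq
      rw [hq]
      have hterm : ∀ s a : S,
          0 ≤ μ (s, a) * ((∑ b, (Pc (w s) b - Pc (w a) b)^2) / 2) := by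
        intro s a
        apply mul_nonneg (hμ0 (s, a))
        have : 0 ≤ ∑ b, (Pc (w s) b - Pc (w a) b)^2 :=
          Finset.sum_nonneg (fun b _ => sq_nonneg _)
        linarith
      have hx0 : 0 < μ (sx, ax) * ((∑ b, (Pc (w sx) b - Pc (w ax) b)^2) / 2) := by
        apply mul_pos hμxpos
        have := hMpos sx ax hsax
        linarith
      calc (0:ℝ) < μ (sx, ax) * ((∑ b, (Pc (w sx) b - Pc (w ax) b)^2) / 2) := hx0
        _ ≤ ∑ a, μ (sx, a) * ((∑ b, (Pc (w sx) b - Pc (w a) b)^2) / 2) :=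
            Finset.single_le_sum
              (f := fun a => μ (sx, a) * ((∑ b, (Pc (w sx) b - Pc (w a) b)^2) / 2))
              (fun a _ => hterm sx a) (Finset.mem_univ ax)
        _ ≤ ∑ s, ∑ a, μ (s, a) * ((∑ b, (Pc (w s) b - Pc (w a) b)^2) / 2) :=
            Finset.single_le_sum
              (f := fun s => ∑ a, μ (s, a) * ((∑ b, (Pc (w s) b - Pc (w a) b)^2) / 2))
              (fun s _ => Finset.sum_nonneg (fun a _ => hterm s a))
              (Finset.mem_univ sx)
    have h1 : 0 ≤ (1 - t) * (∑ s, ∑ a, μ (s, a) * (∑ b, (y s b - y a b) * w s b)) :=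
      mul_nonneg (by linarith) hG1
    have h2 : 0 < (t * γ) * (∑ s, ∑ a, μ (s, a)
        * (∑ b, (Pc (w s) b - Pc (w a) b) * Pc (w s) b)) :=
      mul_pos (mul_pos ht_pos hγ_pos) hG2
    linarith [key, e1, h1, h2]
end

section
/- Suppose condition B fails for the game G = (u¹,u²): every stationary strategy y satisfying U²(μ₀,y) ≥ v² and U¹(μ₀,y) ≥ U¹(μ,y) for all μ ∈ M(m) is constant (y(·|s) is the same distribution for all s). Then there exists ε > 0 such that condition B fails for every game G' = (ũ¹,ũ²) with ‖ũ¹ − u¹‖ < ε and ‖ũ² − u²‖ < ε, where in G' the conditions are formulated with Ũ¹, Ũ², ṽ² defined from ũ¹, ũ² as U¹, U², v² are from u¹, u². -/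
namespace Stmt14Aux
set_option linter.unusedSectionVars false

variable {S B : Type*} [Fintype S] [DecidableEq S] [Fintype B]

lemma Upay_mu0 (m : S → ℝ) (u : S × B → ℝ) (y : S → B → ℝ) :
    Upay u (mu0 m) y = ∑ s, m s * ∑ b, y s b * u (s, b) := by
  unfold Upay mu0
  refine Finset.sum_congr rfl fun s _ => ?_
  rw [Finset.sum_eq_single s]
  · simp
  · intro a _ ha; simp [Ne.symm ha]
  · simp

lemma Upay_marg (m : S → ℝ) (u : S × B → ℝ) (μ : S × S → ℝ)
    (hμ : ∀ s, ∑ a, μ (s, a) = m s) (c : B → ℝ) :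
    Upay u μ (fun _ b => c b) = ∑ s, m s * ∑ b, c b * u (s, b) := by
  unfold Upay
  refine Finset.sum_congr rfl fun s _ => ?_
  rw [← Finset.sum_mul, hμ s]

lemma Upay_const_eq (m : S → ℝ) (u : S × B → ℝ) (μ : S × S → ℝ)
    (hμ : ∀ s, ∑ a, μ (s, a) = m s) (c : B → ℝ) :
    Upay u μ (fun _ b => c b) = Upay u (mu0 m) (fun _ b => c b) := by
  rw [Upay_marg m u μ hμ c, Upay_mu0]

lemma Upay_add (u : S × B → ℝ) (μ : S × S → ℝ) (y z : S → B → ℝ) :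
    Upay u μ (fun s b => y s b + z s b) = Upay u μ y + Upay u μ z := by
  unfold Upay
  rw [← Finset.sum_add_distrib]
  refine Finset.sum_congr rfl fun s _ => ?_
  rw [← Finset.sum_add_distrib]
  refine Finset.sum_congr rfl fun a _ => ?_
  rw [← mul_add, ← Finset.sum_add_distrib]
  congr 1
  refine Finset.sum_congr rfl fun b _ => ?_
  ring

lemma Upay_smul (u : S × B → ℝ) (μ : S × S → ℝ) (t : ℝ) (y : S → B → ℝ) :
    Upay u μ (fun s b => t * y s b) = t * Upay u μ y := by
  unfold Upay
  rw [Finset.mul_sum]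
  refine Finset.sum_congr rfl fun s _ => ?_
  rw [Finset.mul_sum]
  refine Finset.sum_congr rfl fun a _ => ?_
  have : (∑ b, t * y a b * u (s, b)) = t * ∑ b, y a b * u (s, b) := by
    rw [Finset.mul_sum]; exact Finset.sum_congr rfl fun b _ => by ring
  rw [this]; ring

/-- `v_b = Σ_s m(s) w2(s,b)`. -/
def Vb (m : S → ℝ) (w2 : S × B → ℝ) (b : B) : ℝ := ∑ s, m s * w2 (s, b)

def flat (d : S × B → ℝ) : S → B → ℝ := fun s b => d (s, b)

lemma Upay_mu0_const (m : S → ℝ) (w : S × B → ℝ) (c : B → ℝ) :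
    Upay w (mu0 m) (fun _ b => c b) = ∑ b, c b * Vb m w b := by
  rw [Upay_mu0]
  unfold Vb
  simp_rw [Finset.mul_sum]
  rw [Finset.sum_comm]
  exact Finset.sum_congr rfl fun b _ => Finset.sum_congr rfl fun s _ => by ring

/-- Condition B holds, in normalized-cone form. -/
def Bad (m : S → ℝ) (w1 w2 : S × B → ℝ) : Prop :=
  ∃ b : B, (∀ b', Vb m w2 b' ≤ Vb m w2 b) ∧ ∃ d : S × B → ℝ,
    (∀ s b'', b'' ≠ b → 0 ≤ d (s, b'')) ∧
    (∀ s, ∑ b'', d (s, b'') = 0) ∧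
    (∑ q : S × B, |d q| = 1) ∧
    (∀ b'', b'' ≠ b → ∏ s, d (s, b'') = 0) ∧
    (∀ μ : S × S → ℝ, IsCopula m μ → Upay w1 μ (flat d) ≤ Upay w1 (mu0 m) (flat d)) ∧
    0 ≤ Upay w2 (mu0 m) (flat d)

lemma bad_of_nonconstant [Nonempty S] [Nonempty B] (m : S → ℝ)
    (w1 w2 : S × B → ℝ) (y : S → B → ℝ) (hy : IsStrategy y)
    (h2 : ∀ b, Vb m w2 b ≤ Upay w2 (mu0 m) y)
    (h1 : ∀ μ, IsCopula m μ → Upay w1 μ y ≤ Upay w1 (mu0 m) y)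
    (hnc : ¬ ∀ s s', y s = y s') :
    Bad m w1 w2 := by
  obtain ⟨b, -, hb⟩ := Finset.exists_max_image Finset.univ (Vb m w2)
    ⟨Classical.arbitrary B, Finset.mem_univ _⟩
  have hbmax : ∀ b', Vb m w2 b' ≤ Vb m w2 b := fun b' => hb b' (Finset.mem_univ _)
  classical
  set δ : B → ℝ := fun b'' => if b'' = b then 1 else 0 with hδ
  set d0 : S × B → ℝ := fun q => y q.1 q.2 - δ q.2 with hd0
  set mn : B → ℝ := fun b'' => Finset.univ.inf' Finset.univ_nonempty (fun s => d0 (s, b'')) with hmn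
  set h : B → ℝ := fun b'' =>
    if b'' = b then (∑ c ∈ Finset.univ.erase b, mn c) else -(mn b'') with hh
  set g : B → ℝ := fun b'' => h b'' - δ b'' with hg
  set d1 : S × B → ℝ := fun q => d0 q + h q.2 with hd1
  -- basic facts
  have hd0eq : ∀ s (b'' : B), b'' ≠ b → d0 (s, b'') = y s b'' := by
    intro s b'' hne; simp [hd0, hδ, hne]
  have hmn_nonneg : ∀ b'', b'' ≠ b → 0 ≤ mn b'' := by
    intro b'' hne
    apply Finset.le_inf'
    intro s _
    rw [hd0eq s b'' hne]; exact hy.1 s b''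
  have hmn_le : ∀ s (b'' : B), mn b'' ≤ d0 (s, b'') :=
    fun s b'' => Finset.inf'_le _ (Finset.mem_univ s)
  have hd1off : ∀ s (b'' : B), b'' ≠ b → d1 (s, b'') = d0 (s, b'') - mn b'' := by
    intro s b'' hne
    simp [hd1, hh, hne, sub_eq_add_neg]
  -- signs
  have hsigns : ∀ s (b'' : B), b'' ≠ b → 0 ≤ d1 (s, b'') := by
    intro s b'' hne
    rw [hd1off s b'' hne]
    linarith [hmn_le s b'']
  -- row sums
  have hsumh : ∑ b'', h b'' = 0 := by
    rw [← Finset.add_sum_erase _ h (Finset.mem_univ b)]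
    have e : ∀ c ∈ Finset.univ.erase b, h c = -(mn c) := fun c hc => by
      simp [hh, Finset.ne_of_mem_erase hc]
    rw [Finset.sum_congr rfl e]
    have hbb : h b = ∑ c ∈ Finset.univ.erase b, mn c := by simp [hh]
    rw [hbb, Finset.sum_neg_distrib]
    try ring
  have hsumδ : ∑ b'', δ b'' = 1 := by simp [hδ]
  have hrows : ∀ s, ∑ b'', d1 (s, b'') = 0 := by
    intro s
    have e : ∑ b'', d1 (s, b'') = (∑ b'', y s b'') - (∑ b'', δ b'') + ∑ b'', h b'' := by
      rw [← Finset.sum_sub_distrib, ← Finset.sum_add_distrib]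
      try exact Finset.sum_congr rfl fun b'' _ => by simp [hd1, hd0]
    rw [e, hy.2 s, hsumδ, hsumh]
    try ring
  -- zero entries in off-columns
  have hzeros : ∀ b'' : B, b'' ≠ b → ∃ s, d1 (s, b'') = 0 := by
    intro b'' hne
    obtain ⟨s0, -, hs0⟩ := Finset.exists_mem_eq_inf' (Finset.univ_nonempty (α := S))
      (fun s => d0 (s, b''))
    refine ⟨s0, ?_⟩
    rw [hd1off s0 b'' hne]
    have : mn b'' = d0 (s0, b'') := hs0
    rw [this]; ring
  -- flat d1 decomposition
  have hflat : flat d1 = fun s b'' => y s b'' + g b'' := by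
    funext s b''
    simp [flat, hd1, hd0, hg]; ring
  -- copula conditions
  have hΛ : ∀ μ : S × S → ℝ, IsCopula m μ →
      Upay w1 μ (flat d1) ≤ Upay w1 (mu0 m) (flat d1) := by
    intro μ hμ
    rw [hflat]
    have e1 := Upay_add w1 μ y (fun _ b'' => g b'')
    have e2 := Upay_add w1 (mu0 m) y (fun _ b'' => g b'')
    have e3 := Upay_const_eq m w1 μ hμ.2.2.1 g
    have e4 := h1 μ hμ
    rw [e1, e2]; linarith
  -- payoff-2 condition
  have hγ : 0 ≤ Upay w2 (mu0 m) (flat d1) := by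
    rw [hflat]
    rw [Upay_add w2 (mu0 m) y (fun _ b'' => g b''), Upay_mu0_const]
    have hδV : ∑ b'', δ b'' * Vb m w2 b'' = Vb m w2 b := by
      rw [Finset.sum_eq_single b]
      · simp [hδ]
      · intro c _ hc; simp [hδ, hc]
      · simp
    have hsum_hV : ∑ b'', h b'' * Vb m w2 b''
        = ∑ c ∈ Finset.univ.erase b, mn c * (Vb m w2 b - Vb m w2 c) := by
      rw [← Finset.add_sum_erase _ (fun b'' => h b'' * Vb m w2 b'') (Finset.mem_univ b)]
      have e : ∀ c ∈ Finset.univ.erase b, h c * Vb m w2 c = -(mn c * Vb m w2 c) := fun c hc => by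
        simp [hh, Finset.ne_of_mem_erase hc]
      rw [Finset.sum_congr rfl e]
      have hbb : h b = ∑ c ∈ Finset.univ.erase b, mn c := by simp [hh]
      rw [hbb, Finset.sum_neg_distrib, Finset.sum_mul, ← sub_eq_add_neg,
        ← Finset.sum_sub_distrib]
      exact Finset.sum_congr rfl fun c _ => by ring
    have hgV : ∑ b'', g b'' * Vb m w2 b''
        = (∑ c ∈ Finset.univ.erase b, mn c * (Vb m w2 b - Vb m w2 c)) - Vb m w2 b := by
      have e : ∀ b'' ∈ Finset.univ, g b'' * Vb m w2 b''
          = h b'' * Vb m w2 b'' - δ b'' * Vb m w2 b'' := fun b'' _ => by simp [hg]; ring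
      rw [Finset.sum_congr rfl e, Finset.sum_sub_distrib, hsum_hV, hδV]
    have hpos : 0 ≤ ∑ c ∈ Finset.univ.erase b, mn c * (Vb m w2 b - Vb m w2 c) :=
      Finset.sum_nonneg fun c hc =>
        mul_nonneg (hmn_nonneg c (Finset.ne_of_mem_erase hc)) (by linarith [hbmax c])
    rw [hgV]
    linarith [h2 b]
  -- normalization
  set T : ℝ := ∑ q : S × B, |d1 q| with hT
  have hT0 : 0 ≤ T := Finset.sum_nonneg fun q _ => abs_nonneg _
  have hTpos : 0 < T := by
    rcases hT0.lt_or_eq with hlt | heq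
    · exact hlt
    · exfalso
      have hz : ∀ q : S × B, d1 q = 0 := by
        intro q
        have := (Finset.sum_eq_zero_iff_of_nonneg (fun q _ => abs_nonneg (d1 q))).mp heq.symm
        exact abs_eq_zero.mp (this q (Finset.mem_univ q))
      apply hnc
      intro s s'
      funext b''
      have e1 := hz (s, b'')
      have e2 := hz (s', b'')
      simp [hd1, hd0] at e1 e2
      linarith
  have hTne : T ≠ 0 := ne_of_gt hTpos
  refine ⟨b, hbmax, fun q => T⁻¹ * d1 q, ?_, ?_, ?_, ?_, ?_, ?_⟩
  · intro s b'' hne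
    exact mul_nonneg (inv_nonneg.mpr hT0) (hsigns s b'' hne)
  · intro s
    show ∑ b'', T⁻¹ * d1 (s, b'') = 0
    rw [← Finset.mul_sum, hrows s, mul_zero]
  · show (∑ q : S × B, |T⁻¹ * d1 q|) = 1
    have e : ∀ q ∈ Finset.univ, |T⁻¹ * d1 q| = T⁻¹ * |d1 q| := fun q _ => by
      rw [abs_mul, abs_of_pos (inv_pos.mpr hTpos)]
    rw [Finset.sum_congr rfl e, ← Finset.mul_sum, ← hT, inv_mul_cancel₀ hTne]
  · intro b'' hne
    obtain ⟨s0, hs0⟩ := hzeros b'' hne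
    apply Finset.prod_eq_zero (Finset.mem_univ s0)
    show T⁻¹ * d1 (s0, b'') = 0
    rw [hs0, mul_zero]
  · intro μ hμ
    have e : ∀ (w : S × B → ℝ) (ν : S × S → ℝ),
        Upay w ν (flat fun q => T⁻¹ * d1 q) = T⁻¹ * Upay w ν (flat d1) := fun w ν =>
      Upay_smul w ν T⁻¹ (flat d1)
    rw [e, e]
    exact mul_le_mul_of_nonneg_left (hΛ μ hμ) (inv_nonneg.mpr hT0)
  · have e : Upay w2 (mu0 m) (flat fun q => T⁻¹ * d1 q) = T⁻¹ * Upay w2 (mu0 m) (flat d1) :=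
      Upay_smul w2 (mu0 m) T⁻¹ (flat d1)
    rw [e]
    exact mul_nonneg (inv_nonneg.mpr hT0) hγ

lemma not_bad [Nonempty S] [Nonempty B] (m : S → ℝ) (u1 u2 : S × B → ℝ)
    (hfail : ∀ y : S → B → ℝ, IsStrategy y →
      (∀ b : B, Vb m u2 b ≤ Upay u2 (mu0 m) y) →
      (∀ μ : S × S → ℝ, IsCopula m μ → Upay u1 μ y ≤ Upay u1 (mu0 m) y) →
      ∀ s s' : S, y s = y s') :
    ¬ Bad m u1 u2 := by
  rintro ⟨b, hbmax, d, hsgn, hrow, hnorm, hprod, hΛ, hγ⟩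
  classical
  set δ : B → ℝ := fun b'' => if b'' = b then (1:ℝ) else 0 with hδ
  set y : S → B → ℝ := fun s b'' => δ b'' + (1/2) * d (s, b'') with hy
  have habs : ∀ q : S × B, |d q| ≤ 1 := fun q => by
    rw [← hnorm]
    exact Finset.single_le_sum (fun q _ => abs_nonneg (d q)) (Finset.mem_univ q)
  have hyd : ∀ (w : S × B → ℝ) (ν : S × S → ℝ),
      Upay w ν y = Upay w ν (fun _ b'' => δ b'') + (1/2) * Upay w ν (flat d) := by
    intro w ν
    have e1 := Upay_add w ν (fun _ b'' => δ b'') (fun s b'' => (1/2) * flat d s b'')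
    have e2 := Upay_smul w ν (1/2) (flat d)
    rw [e2] at e1
    exact e1
  have hystrat : IsStrategy y := by
    constructor
    · intro s b''
      by_cases hbe : b'' = b
      · subst hbe
        have := (abs_le.mp (habs (s, b''))).1
        simp [hy, hδ]
        linarith
      · have := hsgn s b'' hbe
        simp [hy, hδ, hbe]
        linarith
    · intro s
      rw [Finset.sum_add_distrib, ← Finset.mul_sum]
      have h1 : ∑ b'', δ b'' = 1 := by simp [hδ]
      have h2 : ∑ b'', d (s, b'') = 0 := hrow s
      rw [h1, h2]; ring
  have hUδ : Upay u2 (mu0 m) (fun _ b'' => δ b'') = Vb m u2 b := by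
    rw [Upay_mu0_const, Finset.sum_eq_single b]
    · simp [hδ]
    · intro c _ hc; simp [hδ, hc]
    · simp
  have hfeas2 : ∀ b'', Vb m u2 b'' ≤ Upay u2 (mu0 m) y := by
    intro b''
    rw [hyd, hUδ]
    linarith [hbmax b'', hγ]
  have hfeas1 : ∀ μ, IsCopula m μ → Upay u1 μ y ≤ Upay u1 (mu0 m) y := by
    intro μ hμ
    rw [hyd, hyd]
    have e := Upay_const_eq m u1 μ hμ.2.2.1 δ
    have := hΛ μ hμ
    linarith
  have hconst := hfail y hystrat hfeas2 hfeas1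
  have hdc : ∀ s s' (b'' : B), d (s, b'') = d (s', b'') := by
    intro s s' b''
    have := congrFun (hconst s s') b''
    simp [hy] at this
    linarith
  have hoff : ∀ s (b'' : B), b'' ≠ b → d (s, b'') = 0 := by
    intro s b'' hne
    obtain ⟨s0, -, hs0⟩ := Finset.prod_eq_zero_iff.mp (hprod b'' hne)
    rw [hdc s s0 b'', hs0]
  have hcolb : ∀ s, d (s, b) = 0 := by
    intro s
    have hr := hrow s
    rw [← Finset.add_sum_erase _ _ (Finset.mem_univ b)] at hr
    have hz : ∑ c ∈ Finset.univ.erase b, d (s, c) = 0 :=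
      Finset.sum_eq_zero fun c hc => hoff s c (Finset.ne_of_mem_erase hc)
    linarith
  have : (∑ q : S × B, |d q|) = 0 := by
    apply Finset.sum_eq_zero
    rintro ⟨s, b''⟩ -
    by_cases hbe : b'' = b
    · subst hbe; simp [hcolb s]
    · simp [hoff s b'' hbe]
  rw [hnorm] at this
  norm_num at this

open Filter Topology

lemma tendsto_Upay {wn : ℕ → (S × B → ℝ)} {w : S × B → ℝ}
    {dnn : ℕ → (S × B → ℝ)} {dd : S × B → ℝ}
    (hw : ∀ q, Tendsto (fun k => wn k q) atTop (𝓝 (w q)))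
    (hd : ∀ q, Tendsto (fun k => dnn k q) atTop (𝓝 (dd q))) (ν : S × S → ℝ) :
    Tendsto (fun k => Upay (wn k) ν (flat (dnn k))) atTop (𝓝 (Upay w ν (flat dd))) := by
  unfold Upay flat
  apply tendsto_finset_sum
  intro s _
  apply tendsto_finset_sum
  intro a _
  exact tendsto_const_nhds.mul
    (tendsto_finset_sum _ fun b _ => (hd (a, b)).mul (hw (s, b)))

lemma tendsto_Vb {wn : ℕ → (S × B → ℝ)} {w : S × B → ℝ} (m : S → ℝ)
    (hw : ∀ q, Tendsto (fun k => wn k q) atTop (𝓝 (w q))) (b : B) :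
    Tendsto (fun k => Vb m (wn k) b) atTop (𝓝 (Vb m w b)) := by
  unfold Vb
  exact tendsto_finset_sum _ fun s _ => tendsto_const_nhds.mul (hw (s, b))

end Stmt14Aux

open Filter Topology Stmt14Aux

/- The condition `U²(μ₀,y) ≥ v²`, where `v² = max_b Σ_s m(s)u²(s,b)`, is expressed as
the inequality against every action `b`. Condition B for the game `(w1, w2)` fails iff
every stationary strategy `y` with `U²(μ₀,y) ≥ v²` and `U¹(μ₀,y) ≥ U¹(μ,y)` for all
copulas `μ` is constant. -/
theorem stmt14 {S B : Type*} [Fintype S] [DecidableEq S] (hS : 1 < Fintype.card S)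
    [Fintype B] [Nonempty B]
    (m : S → ℝ) (hm : ∀ s, 0 < m s) (hm1 : ∑ s, m s = 1)
    (u1 u2 : S × B → ℝ)
    (hfail : ∀ y : S → B → ℝ, IsStrategy y →
      (∀ b : B, ∑ s, m s * u2 (s, b) ≤ Upay u2 (mu0 m) y) →
      (∀ μ : S × S → ℝ, IsCopula m μ → Upay u1 μ y ≤ Upay u1 (mu0 m) y) →
      ∀ s s' : S, y s = y s') :
    ∃ ε : ℝ, 0 < ε ∧
      ∀ u1' u2' : S × B → ℝ, ‖u1' - u1‖ < ε → ‖u2' - u2‖ < ε →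
        ∀ y : S → B → ℝ, IsStrategy y →
          (∀ b : B, ∑ s, m s * u2' (s, b) ≤ Upay u2' (mu0 m) y) →
          (∀ μ : S × S → ℝ, IsCopula m μ → Upay u1' μ y ≤ Upay u1' (mu0 m) y) →
          ∀ s s' : S, y s = y s' := by
  haveI : Nonempty S := Fintype.card_pos_iff.mp (by omega)
  by_contra hcon
  push_neg at hcon
  -- extract a sequence of nearby bad games
  have H : ∀ n : ℕ, ∃ p : (S × B → ℝ) × (S × B → ℝ),
      ‖p.1 - u1‖ < 1 / ((n : ℝ) + 1) ∧ ‖p.2 - u2‖ < 1 / ((n : ℝ) + 1) ∧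
      Bad m p.1 p.2 := by
    intro n
    obtain ⟨w1, w2, hn1, hn2, y, hy, hA, hB, s, s', hss⟩ := hcon (1 / ((n : ℝ) + 1)) (by positivity)
    refine ⟨(w1, w2), hn1, hn2, ?_⟩
    exact bad_of_nonconstant m w1 w2 y hy hA hB (fun hall => hss (hall s s'))
  choose W hW1 hW2 hWbad using H
  simp only [Bad] at hWbad
  choose bn hbmax dn hsgn hrow hnorm hprod hlam hgam using hWbad
  -- pigeonhole: one maximizer occurs infinitely often
  have hfreq : ∃ b : B, ∃ᶠ n in atTop, bn n = b := by
    by_contra hno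
    push_neg at hno
    have h' : ∀ᶠ n in atTop, ∀ b : B, ¬ bn n = b := eventually_all.mpr hno
    obtain ⟨n, hn⟩ := h'.exists
    exact hn (bn n) rfl
  obtain ⟨b, hfr⟩ := hfreq
  obtain ⟨φ, hφ, hφb⟩ := Filter.extraction_of_frequently_atTop hfr
  -- compactness: convergent subsequence of the directions
  have hKc : IsCompact (Set.univ.pi fun _ : S × B => Set.Icc (-1 : ℝ) 1) :=
    isCompact_univ_pi fun _ => isCompact_Icc
  have hmem : ∀ k : ℕ, dn (φ k) ∈ (Set.univ.pi fun _ : S × B => Set.Icc (-1 : ℝ) 1) := by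
    intro k
    rw [Set.mem_univ_pi]
    intro q
    have habs : |dn (φ k) q| ≤ 1 := by
      rw [← hnorm (φ k)]
      exact Finset.single_le_sum (f := fun q : S × B => |dn (φ k) q|)
        (fun q _ => abs_nonneg _) (Finset.mem_univ q)
    exact Set.mem_Icc.mpr (abs_le.mp habs)
  obtain ⟨dstar, -, ψ, hψ, hdconv⟩ := hKc.tendsto_subseq hmem
  set ρ : ℕ → ℕ := fun k => φ (ψ k) with hρdef
  have hρ : StrictMono ρ := hφ.comp hψ
  have hρb : ∀ k, bn (ρ k) = b := fun k => hφb (ψ k)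
  have hcd : ∀ q, Tendsto (fun k => dn (ρ k) q) atTop (𝓝 (dstar q)) := by
    intro q
    exact ((continuous_apply q).tendsto dstar).comp hdconv
  -- coordinatewise convergence of the payoffs
  have hWc : ∀ (pr : ((S × B → ℝ) × (S × B → ℝ)) → (S × B → ℝ)) (u : S × B → ℝ),
      (∀ n, ‖pr (W n) - u‖ < 1 / ((n : ℝ) + 1)) →
      ∀ q, Tendsto (fun k => pr (W (ρ k)) q) atTop (𝓝 (u q)) := by
    intro pr u hn q
    have hd0 : Tendsto (fun n => dist (pr (W n) q) (u q)) atTop (𝓝 0) := by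
      refine squeeze_zero (fun n => dist_nonneg) (fun n => ?_)
        tendsto_one_div_add_atTop_nhds_zero_nat
      have h1 : dist (pr (W n) q) (u q) = ‖(pr (W n) - u) q‖ := by
        rw [Real.dist_eq, Pi.sub_apply, Real.norm_eq_abs]
      rw [h1]
      exact le_trans (norm_le_pi_norm _ q) (hn n).le
    have : Tendsto (fun n => pr (W n) q) atTop (𝓝 (u q)) :=
      tendsto_iff_dist_tendsto_zero.mpr hd0
    exact this.comp hρ.tendsto_atTop
  have hW1c : ∀ q, Tendsto (fun k => (W (ρ k)).1 q) atTop (𝓝 (u1 q)) :=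
    hWc Prod.fst u1 hW1
  have hW2c : ∀ q, Tendsto (fun k => (W (ρ k)).2 q) atTop (𝓝 (u2 q)) :=
    hWc Prod.snd u2 hW2
  -- the limit is a bad direction for the original game
  have hbadlim : Bad m u1 u2 := by
    refine ⟨b, ?_, dstar, ?_, ?_, ?_, ?_, ?_, ?_⟩
    · intro b'
      refine le_of_tendsto_of_tendsto' (tendsto_Vb m hW2c b') (tendsto_Vb m hW2c b) ?_
      intro k
      have := hbmax (ρ k) b'
      rwa [hρb k] at this
    · intro s b'' hne
      refine le_of_tendsto_of_tendsto' tendsto_const_nhds (hcd (s, b'')) ?_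
      intro k
      exact hsgn (ρ k) s b'' (by rw [hρb k]; exact hne)
    · intro s
      have t1 : Tendsto (fun k => ∑ b'', dn (ρ k) (s, b'')) atTop
          (𝓝 (∑ b'', dstar (s, b''))) := tendsto_finset_sum _ fun b'' _ => hcd (s, b'')
      have t2 : (fun k => ∑ b'', dn (ρ k) (s, b'')) = fun _ => (0 : ℝ) :=
        funext fun k => hrow (ρ k) s
      rw [t2] at t1
      exact tendsto_nhds_unique t1 tendsto_const_nhds
    · have t1 : Tendsto (fun k => ∑ q : S × B, |dn (ρ k) q|) atTop
          (𝓝 (∑ q : S × B, |dstar q|)) := tendsto_finset_sum _ fun q _ => (hcd q).abs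
      have t2 : (fun k => ∑ q : S × B, |dn (ρ k) q|) = fun _ => (1 : ℝ) :=
        funext fun k => hnorm (ρ k)
      rw [t2] at t1
      exact tendsto_nhds_unique t1 tendsto_const_nhds
    · intro b'' hne
      have t1 : Tendsto (fun k => ∏ s, dn (ρ k) (s, b'')) atTop
          (𝓝 (∏ s, dstar (s, b''))) := tendsto_finset_prod _ fun s _ => hcd (s, b'')
      have t2 : (fun k => ∏ s, dn (ρ k) (s, b'')) = fun _ => (0 : ℝ) :=
        funext fun k => hprod (ρ k) b'' (by rw [hρb k]; exact hne)
      rw [t2] at t1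
      exact tendsto_nhds_unique t1 tendsto_const_nhds
    · intro μ hμ
      refine le_of_tendsto_of_tendsto'
        (tendsto_Upay hW1c hcd μ) (tendsto_Upay hW1c hcd (mu0 m)) ?_
      intro k
      exact hlam (ρ k) μ hμ
    · refine le_of_tendsto_of_tendsto' tendsto_const_nhds (tendsto_Upay hW2c hcd (mu0 m)) ?_
      intro k
      exact hgam (ρ k)
  exact not_bad m u1 u2 hfail hbadlim
end

section
/- Let (σ,τ) be a Nash equilibrium of the one-shot information transmission game, and define the induced stationary strategy ỹ by ỹ(b|s) = Σ_{a∈S} σ(a|s)·τ(b|a). Then ỹ satisfies both equilibrium conditions of the dynamic characterization: (C1) U¹(μ₀,ỹ) ≥ U¹(μ,ỹ) for every μ ∈ M(m), and (C2) U²(μ₀,ỹ) ≥ v², i.e., the equilibrium payoff vector U(μ₀,ỹ) of the one-shot game belongs to the set E(M). -/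
/-- Player `i`'s expected payoff in the one-shot information transmission game, where the
sender plays `σ` and the receiver plays `τ`. -/
def oneShotPayoff {S B : Type*} [Fintype S] [Fintype B]
    (m : S → ℝ) (u : S × B → ℝ) (σ : S → S → ℝ) (τ : S → B → ℝ) : ℝ :=
  ∑ s, m s * ∑ a, σ s a * ∑ b, τ a b * u (s, b)

/- The condition `U²(μ₀,ỹ) ≥ v²`, where `v² = max_b Σ_s m(s)u²(s,b)`, is expressed as
the inequality against every action `b`. -/
theorem stmt15 {S B : Type*} [Fintype S] [DecidableEq S] [Nonempty S]
    [Fintype B] [Nonempty B]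
    (m : S → ℝ) (hm : ∀ s, 0 < m s) (hm1 : ∑ s, m s = 1)
    (u1 u2 : S × B → ℝ)
    (σ : S → S → ℝ) (hσ : IsStrategy σ)
    (τ : S → B → ℝ) (hτ : IsStrategy τ)
    (hNE1 : ∀ σ' : S → S → ℝ, IsStrategy σ' →
      oneShotPayoff m u1 σ' τ ≤ oneShotPayoff m u1 σ τ)
    (hNE2 : ∀ τ' : S → B → ℝ, IsStrategy τ' →
      oneShotPayoff m u2 σ τ' ≤ oneShotPayoff m u2 σ τ)
    (ytil : S → B → ℝ) (hytil : ∀ s b, ytil s b = ∑ a, σ s a * τ a b) :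
    (∀ μ : S × S → ℝ, IsCopula m μ → Upay u1 μ ytil ≤ Upay u1 (mu0 m) ytil) ∧
    (∀ b : B, ∑ s, m s * u2 (s, b) ≤ Upay u2 (mu0 m) ytil) := by
  -- expand ytil in inner sums
  have hexp : ∀ (u : S × B → ℝ) (s a : S), (∑ b, ytil a b * u (s, b))
      = ∑ a', σ a a' * ∑ b, τ a' b * u (s, b) := by
    intro u s a
    simp only [hytil, Finset.sum_mul]
    rw [Finset.sum_comm]
    refine Finset.sum_congr rfl fun a' _ => ?_
    rw [Finset.mul_sum]
    exact Finset.sum_congr rfl fun b _ => by ring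
  have h0 : ∀ u : S × B → ℝ, Upay u (mu0 m) ytil = oneShotPayoff m u σ τ := by
    intro u
    unfold Upay oneShotPayoff
    refine Finset.sum_congr rfl fun s _ => ?_
    rw [show (∑ a, mu0 m (s, a) * ∑ b, ytil a b * u (s, b))
        = ∑ a, if s = a then m s * ∑ b, ytil a b * u (s, b) else 0 from
      Finset.sum_congr rfl fun a _ => by simp [mu0, ite_mul]]
    rw [Finset.sum_ite_eq]
    simp [hexp u s s]
  constructor
  · intro μ hμ
    obtain ⟨hμ0, hμ1, hμr, hμc⟩ := hμ
    set σ' : S → S → ℝ := fun s a' => (m s)⁻¹ * ∑ a, μ (s, a) * σ a a' with hσ'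
    have hsum : ∀ s, ∑ a', ∑ a, μ (s, a) * σ a a' = m s := by
      intro s
      rw [Finset.sum_comm]
      calc ∑ a, ∑ a', μ (s, a) * σ a a' = ∑ a, μ (s, a) := by
            refine Finset.sum_congr rfl fun a _ => ?_
            rw [← Finset.mul_sum, hσ.2 a, mul_one]
        _ = m s := hμr s
    have hσ's : IsStrategy σ' := by
      constructor
      · intro s a'
        exact mul_nonneg (inv_nonneg.mpr (hm s).le)
          (Finset.sum_nonneg fun a _ => mul_nonneg (hμ0 _) (hσ.1 a a'))
      · intro s
        simp only [hσ', ← Finset.mul_sum]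
        rw [hsum s, inv_mul_cancel₀ (hm s).ne']
    have hU : Upay u1 μ ytil = oneShotPayoff m u1 σ' τ := by
      unfold Upay oneShotPayoff
      refine Finset.sum_congr rfl fun s _ => ?_
      calc ∑ a, μ (s, a) * ∑ b, ytil a b * u1 (s, b)
          = ∑ a, ∑ a', μ (s, a) * (σ a a' * ∑ b, τ a' b * u1 (s, b)) := by
            refine Finset.sum_congr rfl fun a _ => ?_
            rw [hexp u1 s a, Finset.mul_sum]
        _ = ∑ a', ∑ a, μ (s, a) * (σ a a' * ∑ b, τ a' b * u1 (s, b)) := Finset.sum_comm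
        _ = ∑ a', m s * (σ' s a' * ∑ b, τ a' b * u1 (s, b)) := by
            refine Finset.sum_congr rfl fun a' _ => ?_
            simp only [hσ']
            rw [← mul_assoc, ← mul_assoc, mul_inv_cancel₀ (hm s).ne', one_mul, Finset.sum_mul]
            exact Finset.sum_congr rfl fun a _ => by ring
        _ = m s * ∑ a', σ' s a' * ∑ b, τ a' b * u1 (s, b) := (Finset.mul_sum _ _ _).symm
    rw [hU, h0]
    exact hNE1 σ' hσ's
  · intro b
    classical
    set τ' : S → B → ℝ := fun _ b' => if b' = b then (1:ℝ) else 0 with hτ'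
    have hτ's : IsStrategy τ' := by
      constructor
      · intro a b'
        by_cases h : b' = b <;> simp [hτ', h]
      · intro a
        simp [hτ']
    have hval : oneShotPayoff m u2 σ τ' = ∑ s, m s * u2 (s, b) := by
      unfold oneShotPayoff
      refine Finset.sum_congr rfl fun s _ => ?_
      congr 1
      have : ∀ a : S, (∑ b', τ' a b' * u2 (s, b')) = u2 (s, b) := by
        intro a
        rw [show (∑ b', τ' a b' * u2 (s, b'))
            = ∑ b', if b' = b then u2 (s, b') else 0 from
          Finset.sum_congr rfl fun b' _ => by simp [hτ', ite_mul]]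
        simp
      calc ∑ a, σ s a * ∑ b', τ' a b' * u2 (s, b')
          = ∑ a, σ s a * u2 (s, b) := Finset.sum_congr rfl fun a _ => by rw [this a]
        _ = u2 (s, b) := by rw [← Finset.sum_mul, hσ.2 s, one_mul]
    rw [h0]
    rw [← hval]
    exact hNE2 τ' hτ's
end
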